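/- Let p(x) = x³ and define q(x) = p(x)² − p(x−1)p(x+1) = x⁶ − (x−1)³(x+1)³. Then E(q) = 72x⁴ + 108x³ + 36x² + 1, and this polynomial has a non-real complex root; in particular E(q) does not have all roots in [−1, 0]. -/

import Mathlib

open Polynomial

/-- The polynomial binomial coefficient `C(x,k) = x(x-1)⋯(x-k+1)/k!` in `ℝ[x]`. -/
noncomputable def binomPoly (k : ℕ) : Polynomial ℝ :=
  Polynomial.C ((k.factorial : ℝ)⁻¹) * descPochhammer ℝ k

lemma multiset_card_eq_four {α : Type*} {s : Multiset α} (h : Multiset.card s = 4) :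
    ∃ a b c d, s = {a, b, c, d} := by
  have hne : s ≠ 0 := by intro h0; simp [h0] at h
  obtain ⟨a, ha⟩ := Multiset.exists_mem_of_ne_zero hne
  obtain ⟨t, rfl⟩ := Multiset.exists_cons_of_mem ha
  have ht : Multiset.card t = 3 := by simpa using h
  obtain ⟨b, c, d, rfl⟩ := Multiset.card_eq_three.mp ht
  exact ⟨a, b, c, d, rfl⟩

lemma exists_nonreal_root :
    ∃ z : ℂ, z.im ≠ 0 ∧ 72*z^4 + 108*z^3 + 36*z^2 + 1 = 0 := by
  set R : Polynomial ℂ := X^4 + C 36 * X^2 + C 108 * X + C 72 with hR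
  have hmonic : R.Monic := by unfold R; monicity!
  have hdeg : R.natDegree = 4 := by unfold R; compute_degree!
  have hsplits : Splits R := IsAlgClosed.splits R
  have hcard : Multiset.card R.roots = 4 := by
    rw [← hdeg]; exact (splits_iff_card_roots.mp hsplits)
  have hex : ∃ s ∈ R.roots, s.im ≠ 0 := by
    by_contra hall
    push_neg at hall
    obtain ⟨a, b, c, d, habcd⟩ := multiset_card_eq_four hcard
    have hmem : ∀ x ∈ ({a,b,c,d} : Multiset ℂ), x.im = 0 := by
      intro x hx; exact hall x (habcd ▸ hx)
    have ha : a = ((a.re : ℝ) : ℂ) := Complex.ext (by simp) (by simp [hmem a (by simp)])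
    have hb : b = ((b.re : ℝ) : ℂ) := Complex.ext (by simp) (by simp [hmem b (by simp)])
    have hc : c = ((c.re : ℝ) : ℂ) := Complex.ext (by simp) (by simp [hmem c (by simp)])
    have hd : d = ((d.re : ℝ) : ℂ) := Complex.ext (by simp) (by simp [hmem d (by simp)])
    have hprod := hsplits.eq_prod_roots_of_monic hmonic
    rw [habcd, ha, hb, hc, hd] at hprod
    set p := a.re; set q := b.re; set r := c.re; set s := d.re
    have heval : ∀ x : ℂ, R.eval x = (x - p) * ((x - q) * ((x - r) * (x - s))) := by
      intro x
      rw [hprod]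
      simp
    have h0 : (p*(q*(r*s)) : ℝ) = 72 := by
      have := (heval 0).symm
      rw [hR] at this; simp at this
      exact_mod_cast this
    have h1 : ((1-p)*((1-q)*((1-r)*(1-s))) : ℝ) = 217 := by
      have := (heval 1).symm
      rw [hR] at this; simp at this; norm_num at this
      exact_mod_cast this
    have h2 : ((2-p)*((2-q)*((2-r)*(2-s))) : ℝ) = 448 := by
      have := (heval 2).symm
      rw [hR] at this; simp at this; norm_num at this
      exact_mod_cast this
    have h3 : ((3-p)*((3-q)*((3-r)*(3-s))) : ℝ) = 801 := by
      have := (heval 3).symm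
      rw [hR] at this; simp at this; norm_num at this
      exact_mod_cast this
    have hE1 : p + q + r + s = 0 := by
      linear_combination (-1/2) * h1 + (1/2) * h2 + (-1/6) * h3 + (1/6) * h0
    have hE2 : p*q + p*r + p*s + q*r + q*s + r*s = 36 := by
      linear_combination (-5/2) * h1 + 2 * h2 + (-1/2) * h3 + h0
    have hsq : p^2 + q^2 + r^2 + s^2 = -72 := by
      linear_combination (p + q + r + s) * hE1 - 2 * hE2
    nlinarith [sq_nonneg p, sq_nonneg q, sq_nonneg r, sq_nonneg s]
  obtain ⟨s, hsroot, hsim⟩ := hex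
  have hs : R.eval s = 0 := by
    exact (mem_roots (hmonic.ne_zero)).mp hsroot
  have hsval : s^4 + 36*s^2 + 108*s + 72 = 0 := by
    rw [hR] at hs; simp at hs; linear_combination hs
  have hs0 : s ≠ 0 := by
    intro h; rw [h] at hsval; norm_num at hsval
  refine ⟨s⁻¹, ?_, ?_⟩
  · rw [Complex.inv_im]
    have : Complex.normSq s > 0 := Complex.normSq_pos.mpr hs0
    intro h
    apply hsim
    field_simp at h
    linarith
  · have hkey : 72*(s⁻¹)^4 + 108*(s⁻¹)^3 + 36*(s⁻¹)^2 + 1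
        = (s^4 + 36*s^2 + 108*s + 72) / s^4 := by
      field_simp
      ring
    rw [hkey, hsval, zero_div]

lemma binom_expand : ((Polynomial.X ^ 3) ^ 2
      - ((Polynomial.X - 1) ^ 3 : Polynomial ℝ) * (Polynomial.X + 1) ^ 3)
    = (72:ℝ) • binomPoly 4 + (108:ℝ) • binomPoly 3 + (36:ℝ) • binomPoly 2
      + (1:ℝ) • binomPoly 0 := by
  rw [binomPoly, binomPoly, binomPoly, binomPoly]
  simp only [smul_eq_C_mul, ← mul_assoc, ← C_mul]
  norm_num [Nat.factorial]
  simp [descPochhammer_succ_right, descPochhammer_zero, map_ofNat]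
  ring

/-- For `p(x) = x³` and `q(x) = p(x)² − p(x−1)p(x+1)`, the operator `E` (with
`E(C(x,k)) = x^k`) gives `E(q) = 72x⁴ + 108x³ + 36x² + 1`, which has a non-real root;
in particular `E(q)` does not have all of its roots in `[−1,0]`. -/
theorem Eq_of_cube_has_nonreal_root (E : Polynomial ℝ →ₗ[ℝ] Polynomial ℝ)
    (hE : ∀ k : ℕ, E (binomPoly k) = Polynomial.X ^ k) :
    E ((Polynomial.X ^ 3) ^ 2
        - ((Polynomial.X - 1) ^ 3 : Polynomial ℝ) * (Polynomial.X + 1) ^ 3)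
      = Polynomial.C (72 : ℝ) * Polynomial.X ^ 4 + Polynomial.C (108 : ℝ) * Polynomial.X ^ 3
        + Polynomial.C (36 : ℝ) * Polynomial.X ^ 2 + 1
    ∧ ∃ z : ℂ, z.im ≠ 0 ∧
        Polynomial.aeval z (E ((Polynomial.X ^ 3) ^ 2
          - ((Polynomial.X - 1) ^ 3 : Polynomial ℝ) * (Polynomial.X + 1) ^ 3)) = 0 := by
  have hEq : E ((Polynomial.X ^ 3) ^ 2
        - ((Polynomial.X - 1) ^ 3 : Polynomial ℝ) * (Polynomial.X + 1) ^ 3)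
      = Polynomial.C (72 : ℝ) * Polynomial.X ^ 4 + Polynomial.C (108 : ℝ) * Polynomial.X ^ 3
        + Polynomial.C (36 : ℝ) * Polynomial.X ^ 2 + 1 := by
    rw [binom_expand, map_add, map_add, map_add, map_smul, map_smul, map_smul, map_smul,
      hE, hE, hE, hE]
    simp only [smul_eq_C_mul, pow_zero, mul_one, map_one, one_mul]
  refine ⟨hEq, ?_⟩
  obtain ⟨z, hz, hz0⟩ := exists_nonreal_root
  refine ⟨z, hz, ?_⟩
  rw [hEq]
  simp only [map_add, map_mul, map_pow, aeval_C, aeval_X, map_one]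
  push_cast
  linear_combination hz0
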